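/- arXiv:2406.01510 — 2 statements merged into one kernel-verified Lean document; each statement's English description precedes it below -/
import Mathlib

section
/- The trimming operators satisfy the Thompson monoid relations: T_i ∘ T_j = T_j ∘ T_{i+1} for all i > j ≥ 1. -/
open MvPolynomial

/-- The Bergeron–Sottile map `R i` (1-based `i`): set the variable `x_i` to zero
and shift every later variable down by one.  Variables are 0-indexed: `X j`
represents `x_{j+1}`. -/
noncomputable def R (i : ℕ) : MvPolynomial ℕ ℤ →ₐ[ℤ] MvPolynomial ℕ ℤ :=
  aeval (fun j => if j + 1 < i then X j else if j + 1 = i then 0 else X (j - 1))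

/-- The trimming operator `T i = (R (i+1) f - R i f) / x_i` (1-based `i`);
the difference `R (i+1) f - R i f` is always divisible by `x_i = X (i-1)`,
so the exact quotient is computed by `divMonomial`. -/
noncomputable def T (i : ℕ) (f : MvPolynomial ℕ ℤ) : MvPolynomial ℕ ℤ :=
  (R (i + 1) f - R i f).divMonomial (Finsupp.single (i - 1) 1)

/-- `f` only involves the variables `x_1, …, x_n`. -/
def InVars (n : ℕ) (f : MvPolynomial ℕ ℤ) : Prop :=
  ∀ d ∈ f.support, ∀ j, n ≤ j → d j = 0

/-- `f` is a quasisymmetric polynomial in the variables `x_1, …, x_n`. -/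
def IsQSym (n : ℕ) (f : MvPolynomial ℕ ℤ) : Prop :=
  ∀ (k : ℕ) (a : Fin k → ℕ), (∀ l, 1 ≤ a l) →
    ∀ (i j : Fin k → ℕ), StrictMono i → StrictMono j →
      (∀ l, i l < n) → (∀ l, j l < n) →
      coeff (∑ l, Finsupp.single (i l) (a l)) f =
        coeff (∑ l, Finsupp.single (j l) (a l)) f

/-- insert a gap at position `p` -/
def sig (p k : ℕ) : ℕ := if k < p then k else k + 1

/-- delete position `p` -/
def del (p k : ℕ) : ℕ := if k < p then k else k - 1

lemma sig_inj (p : ℕ) : Function.Injective (sig p) := by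
  intro x y h; unfold sig at h; split_ifs at h <;> omega

lemma coeff_R (p : ℕ) (f : MvPolynomial ℕ ℤ) (d : ℕ →₀ ℕ) :
    coeff d (R (p + 1) f) = coeff (d.mapDomain (sig p)) f := by
  induction f using MvPolynomial.induction_on' with
  | add f g hf hg => simp [hf, hg]
  | monomial u c =>
    rw [_root_.R, aeval_monomial]
    by_cases hu : u p = 0
    · have hprod : (u.prod fun j k =>
          (if j + 1 < p + 1 then X j else if j + 1 = p + 1 then 0 else X (j - 1)) ^ k)
          = u.prod fun j k => (X (del p j) : MvPolynomial ℕ ℤ) ^ k := by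
        apply Finsupp.prod_congr
        intro k hk
        have hkp : k ≠ p := fun h => by
          simp [h, hu] at hk
        congr 1
        unfold del
        split_ifs with h1 h2 h3 <;> first | rfl | omega
      rw [hprod, ← Finsupp.prod_mapDomain_index (f := del p) (h := fun n e => (X n : MvPolynomial ℕ ℤ) ^ e) (fun _ => pow_zero _) (fun _ _ _ => pow_add _ _ _)]
      rw [show (algebraMap ℤ (MvPolynomial ℕ ℤ)) c = C c from rfl, ← monomial_eq]
      rw [coeff_monomial, coeff_monomial]
      congr 1
      apply propext
      constructor
      · rintro rfl
        rw [← Finsupp.mapDomain_comp]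
        have : Finsupp.mapDomain (sig p ∘ del p) u = Finsupp.mapDomain id u := by
          apply Finsupp.mapDomain_congr
          intro x hx
          have hxp : x ≠ p := fun h => by simp [h, hu] at hx
          simp only [Function.comp, sig, del, id]
          split_ifs <;> omega
        rw [this, Finsupp.mapDomain_id]
      · rintro rfl
        rw [← Finsupp.mapDomain_comp]
        have : del p ∘ sig p = id := by
          funext k; simp only [Function.comp, sig, del, id]
          split_ifs <;> omega
        rw [this, Finsupp.mapDomain_id]
    · have : (u.prod fun j k =>
          ((if j + 1 < p + 1 then X j else if j + 1 = p + 1 then 0 else X (j - 1)) : MvPolynomial ℕ ℤ) ^ k) = 0 := by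
        rw [Finsupp.prod]
        apply Finset.prod_eq_zero (Finsupp.mem_support_iff.2 hu)
        simp [zero_pow hu]
      rw [this, mul_zero, coeff_zero, coeff_monomial, if_neg]
      intro hcon
      apply hu
      rw [hcon]
      apply Finsupp.mapDomain_notin_range
      rintro ⟨k, hk⟩
      unfold sig at hk; split_ifs at hk <;> omega

lemma coeff_T (p : ℕ) (f : MvPolynomial ℕ ℤ) (d : ℕ →₀ ℕ) :
    coeff d (T (p + 1) f) =
      coeff ((d + Finsupp.single p 1).mapDomain (sig (p + 1))) f -
      coeff ((d + Finsupp.single p 1).mapDomain (sig p)) f := by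
  rw [T, coeff_divMonomial]
  have : p + 1 - 1 = p := rfl
  rw [this, coeff_sub, add_comm (Finsupp.single p 1) d, coeff_R p]
  congr 1
  exact coeff_R (p + 1) f _

lemma sig_comp (p q : ℕ) (h : p ≤ q) (d : ℕ →₀ ℕ) :
    Finsupp.mapDomain (sig p) (Finsupp.mapDomain (sig q) d) =
      Finsupp.mapDomain (sig (q + 1)) (Finsupp.mapDomain (sig p) d) := by
  rw [← Finsupp.mapDomain_comp, ← Finsupp.mapDomain_comp]
  congr 1
  funext k
  simp only [Function.comp, sig]
  split_ifs <;> omega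

theorem key (a b : ℕ) (h : b < a) (f : MvPolynomial ℕ ℤ) :
    T (a + 1) (T (b + 1) f) = T (b + 1) (T (a + 1 + 1) f) := by
  apply MvPolynomial.ext
  intro d
  rw [coeff_T a, coeff_T b, coeff_T b, coeff_T b, coeff_T (a+1), coeff_T (a+1)]
  simp only [Finsupp.mapDomain_add, Finsupp.mapDomain_single]
  rw [sig_comp (b+1) (a+1) (by omega), sig_comp (b+1) a (by omega),
      sig_comp b (a+1) (by omega), sig_comp b a (by omega)]
  have e1 : sig (a+1) a = a := by unfold sig; split <;> omega
  have e2 : sig a a = a + 1 := by unfold sig; split <;> omega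
  have e3 : sig (b+1) b = b := by unfold sig; split <;> omega
  have e4 : sig b b = b + 1 := by unfold sig; split <;> omega
  have e5 : sig (b+1) a = a + 1 := by unfold sig; split <;> omega
  have e6 : sig (b+1) (a+1) = a + 2 := by unfold sig; split <;> omega
  have e7 : sig b a = a + 1 := by unfold sig; split <;> omega
  have e8 : sig b (a+1) = a + 2 := by unfold sig; split <;> omega
  have e9 : sig (a+2) (a+1) = a + 1 := by unfold sig; split <;> omega
  have e10 : sig (a+1) (a+1) = a + 2 := by unfold sig; split <;> omega
  have e11 : sig (a+2) b = b := by unfold sig; split <;> omega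
  have e12 : sig (a+2) (b+1) = b + 1 := by unfold sig; split <;> omega
  have e13 : sig (a+1) b = b := by unfold sig; split <;> omega
  have e14 : sig (a+1) (b+1) = b + 1 := by unfold sig; split <;> omega
  simp only [e1, e2, e3, e4, e5, e6, e7, e8, e9, e10, e11, e12, e13, e14]
  simp only [add_right_comm _ (Finsupp.single (a+1) 1) (Finsupp.single b 1),
    add_right_comm _ (Finsupp.single (a+1) 1) (Finsupp.single (b+1) 1),
    add_right_comm _ (Finsupp.single (a+2) 1) (Finsupp.single b 1),
    add_right_comm _ (Finsupp.single (a+2) 1) (Finsupp.single (b+1) 1)]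
  ring

/-- Thompson monoid relations for the trimming operators:
`T_i ∘ T_j = T_j ∘ T_{i+1}` for `i > j ≥ 1`. -/
theorem trimming_thompson (i j : ℕ) (hj : 1 ≤ j) (hij : j < i)
    (f : MvPolynomial ℕ ℤ) : T i (T j f) = T j (T (i + 1) f) := by
  obtain ⟨a, rfl⟩ : ∃ a, i = a + 1 := ⟨i - 1, by omega⟩
  obtain ⟨b, rfl⟩ : ∃ b, j = b + 1 := ⟨j - 1, by omega⟩
  exact key a b (by omega) f
end

section
/- In the Thompson monoid Th (the monoid with generators 1, 2, 3, ... and relations i·j = j·(i+1) for i > j), every element has a unique normal form 1^{c_1}·2^{c_2}·3^{c_3}··· with finitely many nonzero exponents c_i ≥ 0. -/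
/-- The defining relations of the (positive) Thompson monoid on the generators
`0, 1, 2, …`: `i · j = j · (i+1)` whenever `i > j`. -/
def thRel : FreeMonoid ℕ → FreeMonoid ℕ → Prop := fun a b =>
  ∃ i j : ℕ, j < i ∧ a = FreeMonoid.of i * FreeMonoid.of j ∧
    b = FreeMonoid.of j * FreeMonoid.of (i + 1)

/-- The congruence generated by the Thompson relations. -/
def thCon : Con (FreeMonoid ℕ) := conGen thRel

/-- The Thompson monoid. -/
def Th : Type := thCon.Quotient

noncomputable instance : Monoid Th := Con.monoid thCon

/-- The word `1^{c_1} · 2^{c_2} · ⋯` (generators listed in increasing order,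
the `i`-th generator repeated `c_i` times). -/
def wordOf (c : ℕ →₀ ℕ) : FreeMonoid ℕ :=
  FreeMonoid.ofList
    (((List.range (c.support.sup id + 1)).map fun i => List.replicate (c i) i).flatten)

open FreeMonoid List

/-- Insert `i` into a sorted list: before the first element `> i`, incrementing
all following elements. -/
def ins (i : ℕ) : List ℕ → List ℕ
  | [] => [i]
  | a :: t => if a ≤ i then a :: ins i t else i :: ((a :: t).map (· + 1))

lemma ins_map_succ (i : ℕ) (l : List ℕ) :
    ins (i + 1) (l.map (· + 1)) = (ins i l).map (· + 1) := by
  induction l with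
  | nil => simp [ins]
  | cons a t ih =>
      by_cases h : a ≤ i
      · simp [ins, h, Nat.succ_le_succ h, ih]
      · simp [ins, h, fun hh => h (Nat.le_of_succ_le_succ hh), Function.comp]

lemma ins_exchange {i j : ℕ} (h : j < i) (l : List ℕ) :
    ins j (ins i l) = ins (i + 1) (ins j l) := by
  induction l with
  | nil =>
      simp [ins, Nat.not_le.2 h, Nat.le_succ_of_le h.le]
  | cons a t ih =>
      by_cases h1 : a ≤ j
      · have h2 : a ≤ i := h1.trans h.le
        simp [ins, h1, h2, h2.trans (Nat.le_succ i), ih]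
      · by_cases h2 : a ≤ i
        · simp [ins, h1, h2, Nat.not_le.2 h, Nat.succ_le_succ h2,
            Nat.le_succ_of_le h.le, ins_map_succ, Function.comp]
        · have h3 : ¬ i ≤ j := Nat.not_le.2 h
          have h4 : ¬ a + 1 ≤ i + 1 := fun hh => h2 (Nat.le_of_succ_le_succ hh)
          simp [ins, h1, h2, h3, h4, Nat.le_succ_of_le h.le, Function.comp]

lemma le_of_mem_ins {a i : ℕ} {l : List ℕ} (hai : a ≤ i) (h : ∀ x ∈ l, a ≤ x) :
    ∀ x ∈ ins i l, a ≤ x := by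
  induction l with
  | nil => simpa [ins] using hai
  | cons b t ih =>
      intro x hx
      by_cases hb : b ≤ i
      · rw [ins, if_pos hb] at hx
        rcases mem_cons.1 hx with rfl | hx
        · exact h x (mem_cons_self ..)
        · exact ih (fun y hy => h y (mem_cons_of_mem _ hy)) x hx
      · rw [ins, if_neg hb] at hx
        rcases mem_cons.1 hx with rfl | hx
        · exact hai
        · obtain ⟨y, hy, rfl⟩ := mem_map.1 hx
          exact (h y hy).trans (Nat.le_succ y)

lemma sorted_ins (i : ℕ) {l : List ℕ} (h : l.Pairwise (· ≤ ·)) :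
    (ins i l).Pairwise (· ≤ ·) := by
  induction l with
  | nil => simp [ins]
  | cons a t ih =>
      rw [pairwise_cons] at h
      by_cases ha : a ≤ i
      · rw [ins, if_pos ha]
        exact (pairwise_cons).2 ⟨le_of_mem_ins ha h.1, ih h.2⟩
      · rw [ins, if_neg ha]
        refine (pairwise_cons).2 ⟨?_, ?_⟩
        · intro x hx
          obtain ⟨y, hy, rfl⟩ := mem_map.1 hx
          have : a ≤ y := by
            rcases mem_cons.1 hy with rfl | hy
            · exact le_refl _
            · exact h.1 y hy
          omega
        · exact (pairwise_cons.2 h).map _ (fun hab => by omega)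

lemma ins_of_forall_le {i : ℕ} {l : List ℕ} (h : ∀ x ∈ l, x ≤ i) :
    ins i l = l ++ [i] := by
  induction l with
  | nil => simp [ins]
  | cons a t ih =>
      rw [ins, if_pos (h a (mem_cons_self ..))]
      simp [ih fun x hx => h x (mem_cons_of_mem _ hx)]

lemma thCon_base {i j : ℕ} (h : j < i) :
    thCon (of i * of j) (of j * of (i + 1)) :=
  ConGen.Rel.of _ _ ⟨i, j, h, rfl, rfl⟩

lemma thCon_push {j : ℕ} :
    ∀ t : List ℕ, (∀ x ∈ t, j < x) →
      thCon (ofList t * of j) (of j * ofList (t.map (· + 1)))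
  | [], _ => by simpa using thCon.refl _
  | b :: s, h => by
      have hb : j < b := h b (mem_cons_self ..)
      have ih := thCon_push s (fun x hx => h x (mem_cons_of_mem _ hx))
      refine thCon.trans (y := of b * (of j * ofList (s.map (· + 1)))) ?_ ?_
      · rw [ofList_cons, mul_assoc]
        exact thCon.mul (thCon.refl (of b)) ih
      · rw [← mul_assoc]
        have := thCon.mul (thCon_base hb) (thCon.refl (ofList (s.map (· + 1))))
        rw [mul_assoc] at this
        simpa [ofList_cons, mul_assoc] using this

lemma thCon_ins (i : ℕ) :
    ∀ l : List ℕ, l.Pairwise (· ≤ ·) →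
      thCon (ofList l * of i) (ofList (ins i l))
  | [], _ => by simpa [ins] using thCon.refl _
  | a :: t, h => by
      rw [pairwise_cons] at h
      by_cases ha : a ≤ i
      · have ih := thCon_ins i t h.2
        rw [ins, if_pos ha, ofList_cons, ofList_cons, mul_assoc]
        exact thCon.mul (thCon.refl _) ih
      · rw [ins, if_neg ha, ofList_cons]
        refine thCon.trans (thCon_push (a :: t) ?_) ?_
        · intro x hx
          rcases mem_cons.1 hx with rfl | hx
          · omega
          · have := h.1 x hx; omega
        · exact thCon.refl _

def insF (i : ℕ) : Function.End (List ℕ) := ins i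

noncomputable def insHom : FreeMonoid ℕ →* (Function.End (List ℕ))ᵐᵒᵖ :=
  FreeMonoid.lift fun i => MulOpposite.op (insF i)

lemma insHom_ofList : ∀ (l : List ℕ) (s : List ℕ),
    (MulOpposite.unop (insHom (ofList l))) s = l.foldl (fun acc i => ins i acc) s
  | [], s => rfl
  | a :: t, s => by
      rw [ofList_cons, map_mul, MulOpposite.unop_mul]
      show (MulOpposite.unop (insHom (ofList t)))
          ((MulOpposite.unop (insHom (of a))) s) = _
      rw [show insHom (of a) = MulOpposite.op (insF a) from FreeMonoid.lift_eval_of _ a]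
      exact insHom_ofList t (ins a s)

lemma thCon_le_ker : thCon ≤ Con.ker insHom := by
  refine Con.conGen_le.2 ?_
  rintro x y ⟨i, j, h, rfl, rfl⟩
  show insHom _ = insHom _
  have key : insF j * insF i = insF (i + 1) * insF j :=
    funext fun l => ins_exchange h l
  rw [map_mul, map_mul]
  rw [show insHom (of i) = MulOpposite.op (insF i) from rfl,
    show insHom (of j) = MulOpposite.op (insF j) from rfl,
    show insHom (of (i + 1)) = MulOpposite.op (insF (i + 1)) from rfl,
    ← MulOpposite.op_mul, ← MulOpposite.op_mul, key]

noncomputable def evalW (w : FreeMonoid ℕ) : List ℕ :=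
  (MulOpposite.unop (insHom w)) []

lemma evalW_eq (w : FreeMonoid ℕ) :
    evalW w = w.toList.foldl (fun acc i => ins i acc) [] := by
  conv_lhs => rw [evalW, ← ofList_toList w]
  exact insHom_ofList _ _

lemma evalW_congr {w w' : FreeMonoid ℕ} (h : thCon w w') : evalW w = evalW w' := by
  have : insHom w = insHom w' := Con.le_def.mp thCon_le_ker h
  rw [evalW, evalW, this]

lemma sorted_foldl_ins : ∀ (l s : List ℕ), s.Pairwise (· ≤ ·) →
    (l.foldl (fun acc i => ins i acc) s).Pairwise (· ≤ ·)
  | [], s, hs => hs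
  | a :: t, s, hs => sorted_foldl_ins t (ins a s) (sorted_ins a hs)

lemma sorted_evalW (w : FreeMonoid ℕ) : (evalW w).Pairwise (· ≤ ·) := by
  rw [evalW_eq]; exact sorted_foldl_ins _ _ (by simp)

lemma foldl_ins_of_sorted : ∀ (l s : List ℕ), s.Pairwise (· ≤ ·) → l.Pairwise (· ≤ ·) →
    (∀ x ∈ s, ∀ y ∈ l, x ≤ y) →
    l.foldl (fun acc i => ins i acc) s = s ++ l
  | [], s, _, _, _ => by simp
  | a :: t, s, hs, hl, hsl => by
      rw [pairwise_cons] at hl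
      have h1 : ins a s = s ++ [a] :=
        ins_of_forall_le fun x hx => hsl x hx a (mem_cons_self ..)
      have h2 : (s ++ [a]).Pairwise (· ≤ ·) := by
        rw [pairwise_append]
        exact ⟨hs, by simp, by simpa using fun x hx => hsl x hx a (mem_cons_self ..)⟩
      have := foldl_ins_of_sorted t (s ++ [a]) h2 hl.2 ?_
      · simpa [h1, this] using by simp [List.append_assoc]
      · intro x hx y hy
        rcases mem_append.1 hx with hx | hx
        · exact hsl x hx y (mem_cons_of_mem _ hy)
        · simp only [mem_singleton] at hx
          subst hx; exact hl.1 y hy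

lemma thCon_evalW (w : FreeMonoid ℕ) : thCon w (ofList (evalW w)) := by
  rw [evalW_eq, ← ofList_toList w]
  generalize toList w = l
  simp only [toList_ofList]
  induction l using List.reverseRecOn with
  | nil => exact thCon.refl _
  | append_singleton l i ih =>
      rw [List.foldl_append]
      refine thCon.trans ?_ (thCon_ins i _ (sorted_foldl_ins _ _ (by simp)))
      rw [show ofList (l ++ [i]) = ofList l * of i from by
        rw [ofList_append, ofList_singleton]]
      exact thCon.mul ih (thCon.refl _)

/-- The list of the normal-form word of `c`. -/
def listOf (c : ℕ →₀ ℕ) : List ℕ :=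
  ((List.range (c.support.sup id + 1)).map fun i => List.replicate (c i) i).flatten

lemma wordOf_eq (c : ℕ →₀ ℕ) : wordOf c = ofList (listOf c) := rfl

lemma sum_map_range_ite (c : ℕ → ℕ) (i : ℕ) :
    ∀ N, ((List.range N).map fun j => if j = i then c j else 0).sum
      = if i < N then c i else 0 := by
  intro N
  induction N with
  | zero => simp
  | succ n ih =>
      rw [List.range_succ, List.map_append, List.sum_append, ih]
      rcases Nat.lt_trichotomy i n with h | rfl | h
      · simp [h, Nat.lt_succ_of_lt h, Nat.ne_of_gt h]
      · simp
      · have h1 : ¬ i < n := by omega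
        have h2 : ¬ i < n + 1 := by omega
        have h3 : n ≠ i := by omega
        simp [h1, h2, h3]

lemma count_listOf (c : ℕ →₀ ℕ) (i : ℕ) : (listOf c).count i = c i := by
  rw [listOf, List.count_flatten, List.map_map]
  have hfun : ((fun l => List.count i l) ∘ fun j => List.replicate (c j) j)
      = fun j => if j = i then c j else 0 := by
    funext j; simp [List.count_replicate]
  rw [hfun, sum_map_range_ite]
  by_cases hi : i < c.support.sup id + 1
  · rw [if_pos hi]
  · rw [if_neg hi]
    symm
    by_contra hc
    have h1 : i ∈ c.support := Finsupp.mem_support_iff.2 hc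
    have h2 := Finset.le_sup (f := id) h1
    simp only [id] at h2
    exact hi (by omega)

lemma sorted_listOf (c : ℕ →₀ ℕ) : (listOf c).Pairwise (· ≤ ·) := by
  rw [listOf, List.pairwise_flatten]
  refine ⟨?_, ?_⟩
  · intro l hl
    obtain ⟨j, _, rfl⟩ := List.mem_map.1 hl
    exact List.pairwise_replicate.2 (Or.inr le_rfl)
  · refine List.pairwise_lt_range.map _ ?_
    intro a b hab
    intro x hx y hy
    rw [List.eq_of_mem_replicate hx, List.eq_of_mem_replicate hy]
    exact hab.le

lemma evalW_wordOf (c : ℕ →₀ ℕ) : evalW (wordOf c) = listOf c := by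
  rw [wordOf_eq, evalW_eq, toList_ofList]
  simpa using foldl_ins_of_sorted (listOf c) [] (by simp) (sorted_listOf c) (by simp)

/-- In the Thompson monoid, every element has a unique normal
form `1^{c_1} · 2^{c_2} · 3^{c_3} ⋯` with finitely many nonzero exponents. -/
theorem thompson_normal_form (x : Th) :
    ∃! c : ℕ →₀ ℕ, x = thCon.mk' (wordOf c) := by
  obtain ⟨w, rfl⟩ := Con.mk'_surjective (c := thCon) x
  classical
  set l : List ℕ := evalW w with hl
  refine ⟨Multiset.toFinsupp (l : Multiset ℕ), ?_, ?_⟩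
  · -- existence
    have hcount : ∀ i, (listOf (Multiset.toFinsupp (l : Multiset ℕ))).count i = l.count i := by
      intro i
      rw [count_listOf]
      simp [Multiset.toFinsupp_apply]
    have hperm : listOf (Multiset.toFinsupp (l : Multiset ℕ)) ~ l :=
      List.perm_iff_count.2 (by simpa using hcount)
    have heq : listOf (Multiset.toFinsupp (l : Multiset ℕ)) = l :=
      List.Perm.eq_of_pairwise' (sorted_listOf _) (sorted_evalW w) hperm
    show thCon.mk' w = thCon.mk' (wordOf _)
    rw [wordOf_eq, heq]
    exact (Con.eq thCon).2 (thCon_evalW w)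
  · -- uniqueness
    intro d hd
    have hcon : thCon w (wordOf d) := (Con.eq thCon).1 hd
    have hev : l = listOf d := by
      rw [hl, evalW_congr hcon, evalW_wordOf]
    ext i
    rw [Multiset.toFinsupp_apply]
    simp only [Multiset.coe_count]
    rw [hev, count_listOf]
end
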